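/- arXiv:1102.0750 — 3 statements merged into one kernel-verified Lean document; each statement's English description precedes it below -/
import Mathlib

section
/- For 0 ≤ k ≤ n-1 with n ≥ 2, the set of points x ∈ ℝ^n at which the derivative of Γ_k^+(x) = (μ_k^n(x), x_{k+1}) has rank strictly less than 2 is exactly the x_{k+1}-coordinate axis {x ∈ ℝ^n : x_i = 0 for all i ≠ k+1}, and the image of this singular set under Γ_k^+ is the parabola {(t,z) ∈ ℝ^2 : t = z^2}. -/
noncomputable section

/-- The standard index-`k` Morse model `μ_k^n` on `ℝ^n`. -/
def mu (n k : ℕ) (x : Fin n → ℝ) : ℝ :=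
  ∑ i : Fin n, if (i : ℕ) < k then -(x i) ^ 2 else (x i) ^ 2

/-- The local model `Γ_k^+` for a forward index-`k` critical point. -/
def gammaPlus (n k : ℕ) (hk : k < n) (x : Fin n → ℝ) : ℝ × ℝ :=
  (mu n k x, x ⟨k, hk⟩)

open ContinuousLinearMap

lemma sq_deriv (n : ℕ) (i : Fin n) (x : Fin n → ℝ) :
    HasFDerivAt (fun y : Fin n → ℝ => (y i) ^ 2) ((2 * x i) • (proj i : (Fin n → ℝ) →L[ℝ] ℝ)) x := by
  have h := ((proj i : (Fin n → ℝ) →L[ℝ] ℝ).hasFDerivAt (x := x)).mul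
    ((proj i : (Fin n → ℝ) →L[ℝ] ℝ).hasFDerivAt (x := x))
  have : (2 * x i) • (proj i : (Fin n → ℝ) →L[ℝ] ℝ) = x i • proj i + x i • proj i := by
    ext v; simp; ring
  rw [this]
  simp only [pow_two]; exact h

def Dmu (n k : ℕ) (x : Fin n → ℝ) : (Fin n → ℝ) →L[ℝ] ℝ :=
  ∑ i : Fin n, (((if (i : ℕ) < k then (-2 : ℝ) else 2)) * x i) • (proj i : (Fin n → ℝ) →L[ℝ] ℝ)

lemma hasFDerivAt_mu (n k : ℕ) (x : Fin n → ℝ) :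
    HasFDerivAt (mu n k) (Dmu n k x) x := by
  have : HasFDerivAt (fun y => ∑ i : Fin n, if (i : ℕ) < k then -(y i) ^ 2 else (y i) ^ 2)
      (Dmu n k x) x := by
    apply HasFDerivAt.fun_sum
    intro i _
    by_cases h : (i : ℕ) < k
    · have := (sq_deriv n i x).fun_neg
      have e : (((if (i : ℕ) < k then (-2 : ℝ) else 2)) * x i) • (proj i : (Fin n → ℝ) →L[ℝ] ℝ)
          = -((2 * x i) • (proj i : (Fin n → ℝ) →L[ℝ] ℝ)) := by
        ext v; simp [h]
      rw [e]; simpa [h] using this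
    · simpa [h] using sq_deriv n i x
  exact this

lemma hasFDerivAt_gamma (n k : ℕ) (hk : k < n) (x : Fin n → ℝ) :
    HasFDerivAt (gammaPlus n k hk) ((Dmu n k x).prod (proj ⟨k, hk⟩)) x := by
  have h2 : HasFDerivAt (fun y : Fin n → ℝ => y ⟨k, hk⟩)
      (proj ⟨k, hk⟩ : (Fin n → ℝ) →L[ℝ] ℝ) x :=
    (proj (⟨k, hk⟩ : Fin n) : (Fin n → ℝ) →L[ℝ] ℝ).hasFDerivAt
  exact HasFDerivAt.prodMk (hasFDerivAt_mu n k x) h2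

lemma fderiv_gamma (n k : ℕ) (hk : k < n) (x : Fin n → ℝ) :
    fderiv ℝ (gammaPlus n k hk) x = (Dmu n k x).prod (proj ⟨k, hk⟩) :=
  (hasFDerivAt_gamma n k hk x).fderiv

lemma Dmu_apply (n k : ℕ) (x v : Fin n → ℝ) :
    Dmu n k x v = ∑ i : Fin n, ((if (i : ℕ) < k then (-2 : ℝ) else 2) * x i) * v i := by
  simp only [Dmu, ContinuousLinearMap.sum_apply, ContinuousLinearMap.smul_apply, proj_apply,
    smul_eq_mul]

lemma Dmu_single (n k : ℕ) (x : Fin n → ℝ) (j : Fin n) :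
    Dmu n k x (Pi.single j 1) = (if (j : ℕ) < k then (-2 : ℝ) else 2) * x j := by
  rw [Dmu_apply]
  rw [Finset.sum_eq_single_of_mem j (Finset.mem_univ j)]
  · simp
  · intro i _ hij
    simp [Pi.single_eq_of_ne hij]

/-- The singular set of `Γ_k^+` (points where the derivative has rank `< 2`) is exactly the
`x_{k+1}`-coordinate axis, and its image is the parabola `t = z²`. -/
theorem stmt2 (n k : ℕ) (hn : 2 ≤ n) (hk : k < n) :
    {x : Fin n → ℝ |
        LinearMap.rank (fderiv ℝ (gammaPlus n k hk) x).toLinearMap < 2} =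
      {x : Fin n → ℝ | ∀ i : Fin n, i ≠ ⟨k, hk⟩ → x i = 0} ∧
    gammaPlus n k hk '' {x : Fin n → ℝ | ∀ i : Fin n, i ≠ ⟨k, hk⟩ → x i = 0} =
      {p : ℝ × ℝ | p.1 = p.2 ^ 2} := by
  set kF : Fin n := ⟨k, hk⟩ with hkF
  have hkk : ¬ ((kF : ℕ) < k) := by simp [hkF]
  constructor
  · ext x
    simp only [Set.mem_setOf_eq]
    constructor
    · -- rank < 2 → axis
      intro hrank i hi
      by_contra hxi
      exfalso
      set f := (fderiv ℝ (gammaPlus n k hk) x).toLinearMap with hf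
      have hfapp : ∀ v, f v = (Dmu n k x v, v kF) := by
        intro v; rw [hf, fderiv_gamma]; rfl
      set u : ℝ × ℝ := ((if (i : ℕ) < k then (-2 : ℝ) else 2) * x i, 0) with hu
      set w : ℝ × ℝ := ((if (k : ℕ) < k then (-2 : ℝ) else 2) * x kF, 1) with hw
      have hu1 : u.1 ≠ 0 := by
        rw [hu]
        by_cases h : (i : ℕ) < k <;> simp [h, hxi]
      have hfu : f (Pi.single i 1) = u := by
        rw [hfapp, Dmu_single]
        simp [hu, Pi.single_eq_of_ne (Ne.symm hi)]
      have hfw : f (Pi.single kF 1) = w := by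
        rw [hfapp, Dmu_single, hw, Pi.single_eq_same]
      have hind : LinearIndependent ℝ ![u, w] := by
        rw [LinearIndependent.pair_iff]
        intro s t hst
        have h2 : s * u.2 + t * w.2 = 0 := congrArg Prod.snd hst
        have ht : t = 0 := by simpa [hu, hw] using h2
        have h1 : s * u.1 + t * w.1 = 0 := congrArg Prod.fst hst
        rw [ht] at h1
        simp only [zero_mul, add_zero] at h1
        exact ⟨(mul_eq_zero.mp h1).resolve_right hu1, ht⟩
      -- lift to the range submodule
      set g : Fin 2 → LinearMap.range f :=
        ![⟨u, ⟨Pi.single i 1, hfu⟩⟩, ⟨w, ⟨Pi.single kF 1, hfw⟩⟩] with hg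
      have hcomp : (LinearMap.range f).subtype ∘ g = ![u, w] := by
        funext j
        fin_cases j <;> rfl
      have hindg : LinearIndependent ℝ g := by
        apply LinearIndependent.of_comp (LinearMap.range f).subtype
        rw [hcomp]
        exact hind
      have := hindg.cardinal_le_rank
      rw [Cardinal.mk_fintype] at this
      simp only [Fintype.card_fin, Nat.cast_ofNat] at this
      exact absurd hrank (not_lt.mpr this)
    · -- axis → rank < 2
      intro hax
      set f := (fderiv ℝ (gammaPlus n k hk) x).toLinearMap with hf
      have hfapp : ∀ v, f v = (Dmu n k x v, v kF) := by
        intro v; rw [hf, fderiv_gamma]; rfl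
      have hD : ∀ v, Dmu n k x v = (2 * x kF) * v kF := by
        intro v
        rw [Dmu_apply, Finset.sum_eq_single_of_mem kF (Finset.mem_univ kF)]
        · simp [hkk]
        · intro i _ hi
          simp [hax i hi]
      have hle : LinearMap.range f ≤ Submodule.span ℝ {((2 * x kF, 1) : ℝ × ℝ)} := by
        rintro y ⟨v, rfl⟩
        have : f v = (v kF) • ((2 * x kF, 1) : ℝ × ℝ) := by
          rw [hfapp, hD]
          ext <;> simp [mul_comm]
        rw [this]
        exact Submodule.smul_mem _ _ (Submodule.mem_span_singleton_self _)
      calc LinearMap.rank f ≤ Module.rank ℝ (Submodule.span ℝ {((2 * x kF, 1) : ℝ × ℝ)}) :=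
            Submodule.rank_mono hle
        _ ≤ Cardinal.mk ({((2 * x kF, 1) : ℝ × ℝ)} : Set (ℝ × ℝ)) := rank_span_le _
        _ = 1 := Cardinal.mk_singleton _
        _ < 2 := Cardinal.one_lt_two
  · -- image is the parabola
    ext p
    simp only [Set.mem_image, Set.mem_setOf_eq]
    constructor
    · rintro ⟨x, hax, rfl⟩
      show mu n k x = (x kF) ^ 2
      rw [mu, Finset.sum_eq_single_of_mem kF (Finset.mem_univ kF)]
      · simp [hkk]
      · intro i _ hi
        simp [hax i hi]
    · intro hp
      refine ⟨Pi.single kF p.2, fun i hi => Pi.single_eq_of_ne hi _, ?_⟩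
      have hmu : mu n k (Pi.single kF p.2) = p.2 ^ 2 := by
        rw [mu, Finset.sum_eq_single_of_mem kF (Finset.mem_univ kF)]
        · simp [hkk]
        · intro i _ hi
          simp [Pi.single_eq_of_ne hi]
      rw [gammaPlus, hmu, Pi.single_eq_same]
      exact Prod.ext hp.symm rfl
end
end

section
/- Let a ∈ ℝ^n be nonzero, let J : ℝ^n → ℝ^n be the linear involution J(x_1,...,x_n) = (-x_1,...,-x_k, x_{k+1},...,x_n), and define G : ℝ^n → ℝ^2 by G(x) = (μ_k^n(x), ⟨a, x⟩). Then: (1) the set of points where the derivative of G has rank < 2 is exactly the line ℝ·(Ja); (2) along this line, G(s·Ja) = (s^2·μ_k^n(a), s·μ_k^n(a)) for all s ∈ ℝ; (3) in particular, if μ_k^n(a) = 0 then G is constant, equal to (0,0), on the whole line ℝ·(Ja) of critical points of G. -/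
noncomputable section

/-- The linear involution `J(x₁,…,xₙ) = (-x₁,…,-x_k, x_{k+1},…,xₙ)`. -/
def Jmap (n k : ℕ) (x : Fin n → ℝ) : Fin n → ℝ :=
  fun i => if (i : ℕ) < k then -x i else x i

/-- The map `G(x) = (μ_k^n(x), ⟨a,x⟩)`. -/
def Gmap (n k : ℕ) (a : Fin n → ℝ) (x : Fin n → ℝ) : ℝ × ℝ :=
  (mu n k x, ∑ i : Fin n, a i * x i)

open Finset

def dotCLM {n : ℕ} (c : Fin n → ℝ) : (Fin n → ℝ) →L[ℝ] ℝ :=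
  ∑ i : Fin n, c i • (ContinuousLinearMap.proj i : (Fin n → ℝ) →L[ℝ] ℝ)

lemma dotCLM_apply {n : ℕ} (c v : Fin n → ℝ) : dotCLM c v = ∑ i, c i * v i := by
  simp [dotCLM, smul_eq_mul]

example {n : ℕ} (x : Fin n → ℝ) (i : Fin n) :
    HasFDerivAt (fun y : Fin n → ℝ => (y i)^2)
      ((2 * x i) • (ContinuousLinearMap.proj i : (Fin n → ℝ) →L[ℝ] ℝ)) x := by
  have hp : HasFDerivAt (fun y : Fin n → ℝ => y i)
      (ContinuousLinearMap.proj i : (Fin n → ℝ) →L[ℝ] ℝ) x := hasFDerivAt_apply i x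
  have := hp.mul hp
  simp only [← pow_two] at this
  refine this.congr_fderiv ?_
  rw [two_mul, add_smul]

lemma hasFDerivAt_G (n k : ℕ) (a x : Fin n → ℝ) :
    HasFDerivAt (Gmap n k a)
      ((dotCLM (fun i => 2 * Jmap n k x i)).prod (dotCLM a)) x := by
  have hmu : HasFDerivAt (mu n k) (dotCLM (fun i => 2 * Jmap n k x i)) x := by
    have h : ∀ i : Fin n,
        HasFDerivAt (fun y : Fin n → ℝ => if (i : ℕ) < k then -(y i)^2 else (y i)^2)
          ((2 * Jmap n k x i) • (ContinuousLinearMap.proj i : (Fin n → ℝ) →L[ℝ] ℝ)) x := by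
      intro i
      have hp : HasFDerivAt (fun y : Fin n → ℝ => y i)
          (ContinuousLinearMap.proj i : (Fin n → ℝ) →L[ℝ] ℝ) x := hasFDerivAt_apply i x
      have hsq : HasFDerivAt (fun y : Fin n → ℝ => (y i)^2)
          ((2 * x i) • (ContinuousLinearMap.proj i : (Fin n → ℝ) →L[ℝ] ℝ)) x := by
        have := hp.mul hp
        simp only [← pow_two] at this
        refine this.congr_fderiv ?_
        rw [two_mul, add_smul]
      by_cases hik : (i : ℕ) < k
      · simp only [hik, if_true, Jmap]
        have := hsq.neg
        refine this.congr_fderiv ?_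
        rw [mul_neg]
        exact (neg_smul _ _).symm
      · simp only [hik, if_false, Jmap]
        exact hsq
    have := HasFDerivAt.fun_sum (u := Finset.univ) (fun i _ => h i)
    unfold mu dotCLM
    exact this
  have hin : HasFDerivAt (fun y : Fin n → ℝ => ∑ i, a i * y i) (dotCLM a) x := by
    have : (fun y : Fin n → ℝ => ∑ i, a i * y i) = ⇑(dotCLM a) :=
      funext fun v => (dotCLM_apply a v).symm
    rw [this]
    exact (dotCLM a).hasFDerivAt
  exact hmu.prodMk hin

lemma dotCLM_smul_left {n : ℕ} (t : ℝ) (c v : Fin n → ℝ) :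
    dotCLM (t • c) v = t * dotCLM c v := by
  simp only [dotCLM_apply, Pi.smul_apply, smul_eq_mul, Finset.mul_sum]
  exact Finset.sum_congr rfl fun i _ => by ring

lemma dot_symm {n : ℕ} (c v : Fin n → ℝ) : dotCLM c v = dotCLM v c := by
  simp [dotCLM_apply, mul_comm]

lemma dot_self_pos {n : ℕ} (v : Fin n → ℝ) (hv : v ≠ 0) : 0 < dotCLM v v := by
  rw [dotCLM_apply]
  rcases Function.ne_iff.mp hv with ⟨i, hi⟩
  exact Finset.sum_pos' (fun j _ => mul_self_nonneg _)
    ⟨i, Finset.mem_univ i, mul_self_pos.mpr hi⟩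

lemma rank_lt_two_of_dep {n : ℕ} (a b : Fin n → ℝ) (t : ℝ) (hb : b = t • a) :
    LinearMap.rank ((dotCLM b).prod (dotCLM a)).toLinearMap < 2 := by
  have hle : LinearMap.range ((dotCLM b).prod (dotCLM a)).toLinearMap ≤
      Submodule.span ℝ {((t : ℝ), (1 : ℝ))} := by
    rintro p ⟨v, rfl⟩
    rw [Submodule.mem_span_singleton]
    refine ⟨dotCLM a v, ?_⟩
    subst hb
    simp only [ContinuousLinearMap.coe_prod, LinearMap.prod_apply, Pi.prod,
      Prod.smul_mk, smul_eq_mul, mul_one]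
    refine Prod.ext ?_ rfl
    show dotCLM a v * t = dotCLM (t • a) v
    rw [dotCLM_smul_left]
    ring
  refine lt_of_le_of_lt ((Submodule.rank_mono hle).trans
    ((rank_span_le _).trans_eq (Cardinal.mk_singleton _))) (by norm_num)

lemma rank_eq_two_of_indep {n : ℕ} (a b : Fin n → ℝ) (ha : a ≠ 0)
    (h : ∀ t : ℝ, b ≠ t • a) :
    LinearMap.rank ((dotCLM b).prod (dotCLM a)).toLinearMap = 2 := by
  have haa : 0 < dotCLM a a := dot_self_pos a ha
  set t0 : ℝ := dotCLM a b / dotCLM a a with ht0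
  set v : Fin n → ℝ := b - t0 • a with hvdef
  have hav : dotCLM a v = 0 := by
    rw [hvdef, map_sub, map_smul, smul_eq_mul, ht0, div_mul_cancel₀ _ haa.ne', sub_self]
  have hv0 : v ≠ 0 := by
    intro hv
    exact h t0 (by rw [← sub_eq_zero]; exact hv)
  have hvv : 0 < dotCLM v v := dot_self_pos v hv0
  have hbv : dotCLM b v = dotCLM v v := by
    have hb' : b = v + t0 • a := by rw [hvdef]; abel
    rw [dot_symm b v, hb', map_add, map_smul, smul_eq_mul, dot_symm v a, hav,
      mul_zero, add_zero]
  have hsurj : Function.Surjective ((dotCLM b).prod (dotCLM a)).toLinearMap := by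
    rintro ⟨p, q⟩
    set u : Fin n → ℝ :=
      (q / dotCLM a a) • a + ((p - q / dotCLM a a * dotCLM b a) / dotCLM v v) • v with hu
    refine ⟨u, Prod.ext ?_ ?_⟩
    · show dotCLM b u = p
      rw [hu, map_add, map_smul, map_smul, smul_eq_mul, smul_eq_mul, hbv]
      field_simp
      ring
    · show dotCLM a u = q
      rw [hu, map_add, map_smul, map_smul, smul_eq_mul, smul_eq_mul, hav]
      field_simp
      ring
  exact (rank_range_of_surjective _ hsurj).trans
    (by rw [rank_prod', Module.rank_self]; norm_num)

lemma Jmap_smul (n k : ℕ) (s : ℝ) (y : Fin n → ℝ) :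
    Jmap n k (s • y) = s • Jmap n k y := by
  funext i
  by_cases h : (i : ℕ) < k <;> simp [Jmap, h]

lemma Jmap_Jmap (n k : ℕ) (y : Fin n → ℝ) : Jmap n k (Jmap n k y) = y := by
  funext i
  by_cases h : (i : ℕ) < k <;> simp [Jmap, h]

lemma G_line (n k : ℕ) (a : Fin n → ℝ) (s : ℝ) :
    Gmap n k a (s • Jmap n k a) = (s ^ 2 * mu n k a, s * mu n k a) := by
  have h1 : mu n k (s • Jmap n k a) = s ^ 2 * mu n k a := by
    unfold mu
    rw [Finset.mul_sum]
    refine Finset.sum_congr rfl fun i _ => ?_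
    by_cases h : (i : ℕ) < k <;> simp [Jmap, h, Pi.smul_apply, smul_eq_mul] <;> ring
  have h2 : ∑ i : Fin n, a i * (s • Jmap n k a) i = s * mu n k a := by
    unfold mu
    rw [Finset.mul_sum]
    refine Finset.sum_congr rfl fun i _ => ?_
    by_cases h : (i : ℕ) < k <;> simp [Jmap, h, Pi.smul_apply, smul_eq_mul] <;> ring
  unfold Gmap
  rw [h1, h2]

/-- For `a ≠ 0`: (1) the singular set of `G = (μ_k^n, ⟨a,·⟩)` is exactly the line `ℝ·(Ja)`;
(2) `G(s·Ja) = (s²μ_k^n(a), sμ_k^n(a))`; (3) if `μ_k^n(a) = 0` then `G` is constant `(0,0)`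
on the whole line of critical points. -/
theorem stmt8 (n k : ℕ) (hk : k ≤ n) (a : Fin n → ℝ) (ha : a ≠ 0) :
    ({x : Fin n → ℝ |
        LinearMap.rank (fderiv ℝ (Gmap n k a) x).toLinearMap < 2} =
      {x : Fin n → ℝ | ∃ s : ℝ, x = s • Jmap n k a}) ∧
    (∀ s : ℝ, Gmap n k a (s • Jmap n k a) = (s ^ 2 * mu n k a, s * mu n k a)) ∧
    (mu n k a = 0 → ∀ s : ℝ, Gmap n k a (s • Jmap n k a) = (0, 0)) := by
  refine ⟨?_, fun s => G_line n k a s, fun hmu s => by rw [G_line, hmu]; simp⟩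
  ext x
  simp only [Set.mem_setOf_eq]
  rw [(hasFDerivAt_G n k a x).fderiv]
  constructor
  · intro hrank
    by_contra hns
    push_neg at hns
    have hb : ∀ t : ℝ, (fun i => 2 * Jmap n k x i) ≠ t • a := by
      intro t ht
      refine hns (t / 2) ?_
      have hjx : Jmap n k x = (t / 2) • a := by
        funext i
        have := congrFun ht i
        simp only [Pi.smul_apply, smul_eq_mul] at this ⊢
        linarith
      calc x = Jmap n k (Jmap n k x) := (Jmap_Jmap n k x).symm
        _ = Jmap n k ((t / 2) • a) := by rw [hjx]
        _ = (t / 2) • Jmap n k a := Jmap_smul n k _ a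
    rw [rank_eq_two_of_indep a _ ha hb] at hrank
    exact lt_irrefl _ hrank
  · rintro ⟨s, rfl⟩
    refine rank_lt_two_of_dep a _ (2 * s) ?_
    have h1 : Jmap n k (s • Jmap n k a) = s • a := by
      rw [Jmap_smul, Jmap_Jmap]
    funext i
    rw [congrFun h1 i]
    simp only [Pi.smul_apply, smul_eq_mul]
    ring
end
end

section
/- Let t > 0 and define h_t : ℝ^2 → ℝ by h_t(x,y) = x^3 - 3xy^2 + t·(x^2 + y^2). Then h_t has exactly four critical points: (0,0), (-2t/3, 0), (t/3, t/√3), and (t/3, -t/√3). All four are nondegenerate; (0,0) is a local minimum (Morse index 0) and the other three are saddle points (Morse index 1). -/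
open Real


noncomputable section

/-- The perturbed monkey saddle `h_t(x,y) = x³ - 3xy² + t(x² + y²)`. -/
def hmonkey (t : ℝ) (p : ℝ × ℝ) : ℝ :=
  p.1 ^ 3 - 3 * p.1 * p.2 ^ 2 + t * (p.1 ^ 2 + p.2 ^ 2)

/-- The Hessian bilinear form of `f : ℝ² → ℝ` at `p`. -/
def hess2 (f : ℝ × ℝ → ℝ) (p v w : ℝ × ℝ) : ℝ :=
  iteratedFDeriv ℝ 2 f p ![v, w]

/-- `p` is a nondegenerate critical point of Morse index 0 (local minimum type): the Hessian
diagonalizes with two positive eigenvalues. -/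
def IndexZeroAt (f : ℝ × ℝ → ℝ) (p : ℝ × ℝ) : Prop :=
  ∃ v w : ℝ × ℝ, LinearIndependent ℝ ![v, w] ∧
    hess2 f p v w = 0 ∧ hess2 f p w v = 0 ∧ 0 < hess2 f p v v ∧ 0 < hess2 f p w w

/-- `p` is a nondegenerate critical point of Morse index 1 (saddle type): the Hessian
diagonalizes with one negative and one positive eigenvalue. -/
def IndexOneAt (f : ℝ × ℝ → ℝ) (p : ℝ × ℝ) : Prop :=
  ∃ v w : ℝ × ℝ, LinearIndependent ℝ ![v, w] ∧
    hess2 f p v w = 0 ∧ hess2 f p w v = 0 ∧ hess2 f p v v < 0 ∧ 0 < hess2 f p w w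

abbrev E1 : ℝ × ℝ →L[ℝ] ℝ := ContinuousLinearMap.fst ℝ ℝ ℝ
abbrev E2 : ℝ × ℝ →L[ℝ] ℝ := ContinuousLinearMap.snd ℝ ℝ ℝ

def Dh (t : ℝ) (p : ℝ × ℝ) : ℝ × ℝ →L[ℝ] ℝ :=
  (3 * p.1 ^ 2 - 3 * p.2 ^ 2 + 2 * t * p.1) • E1 + (-(6 * p.1 * p.2) + 2 * t * p.2) • E2

lemma hasFDerivAt_hmonkey (t : ℝ) (p : ℝ × ℝ) : HasFDerivAt (hmonkey t) (Dh t p) p := by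
  have h1 : HasFDerivAt (fun q : ℝ × ℝ => q.1) E1 p := hasFDerivAt_fst
  have h2 : HasFDerivAt (fun q : ℝ × ℝ => q.2) E2 p := hasFDerivAt_snd
  have key := (((h1.mul h1).mul h1).sub (((h1.const_mul 3).mul (h2.mul h2)))).add
      (((h1.mul h1).add (h2.mul h2)).const_mul t)
  have hfun : (fun q : ℝ × ℝ => (q.1 * q.1 * q.1 - 3 * q.1 * (q.2 * q.2)) + t * (q.1 * q.1 + q.2 * q.2)) = hmonkey t := by
    funext q; simp [hmonkey]; ring
  replace key : HasFDerivAt (fun q : ℝ × ℝ => (q.1 * q.1 * q.1 - 3 * q.1 * (q.2 * q.2)) + t * (q.1 * q.1 + q.2 * q.2)) _ p := key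
  rw [hfun] at key
  refine key.congr_fderiv ?_
  ext v <;> simp [Dh] <;> ring

lemma fderiv_hmonkey (t : ℝ) : fderiv ℝ (hmonkey t) = fun p => Dh t p :=
  funext fun p => (hasFDerivAt_hmonkey t p).fderiv

lemma hess2_hmonkey (t : ℝ) (p v w : ℝ × ℝ) :
    hess2 (hmonkey t) p v w = (6 * p.1 + 2 * t) * v.1 * w.1 - 6 * p.2 * v.2 * w.1
      - 6 * p.2 * v.1 * w.2 + (2 * t - 6 * p.1) * v.2 * w.2 := by
  have h1 : HasFDerivAt (fun q : ℝ × ℝ => q.1) E1 p := hasFDerivAt_fst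
  have h2 : HasFDerivAt (fun q : ℝ × ℝ => q.2) E2 p := hasFDerivAt_snd
  have ha : HasFDerivAt (fun q : ℝ × ℝ => 3 * q.1 ^ 2 - 3 * q.2 ^ 2 + 2 * t * q.1)
      ((6 * p.1 + 2 * t) • E1 + (-(6 * p.2)) • E2) p := by
    have key := (((h1.mul h1).const_mul 3).sub ((h2.mul h2).const_mul 3)).add (h1.const_mul (2*t))
    have : (fun q : ℝ × ℝ => 3 * (q.1 * q.1) - 3 * (q.2 * q.2) + 2 * t * q.1)
        = (fun q : ℝ × ℝ => 3 * q.1 ^ 2 - 3 * q.2 ^ 2 + 2 * t * q.1) := by funext q; ring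
    replace key : HasFDerivAt (fun q : ℝ × ℝ => 3 * (q.1 * q.1) - 3 * (q.2 * q.2) + 2 * t * q.1) _ p := key
    rw [this] at key
    refine key.congr_fderiv ?_
    ext v <;> simp <;> ring
  have hb : HasFDerivAt (fun q : ℝ × ℝ => -(6 * q.1 * q.2) + 2 * t * q.2)
      ((-(6 * p.2)) • E1 + (2 * t - 6 * p.1) • E2) p := by
    have key := (((h1.const_mul 6).mul h2).const_mul (-1 : ℝ)).add (h2.const_mul (2*t))
    have : (fun q : ℝ × ℝ => (-1 : ℝ) * (6 * q.1 * q.2) + 2 * t * q.2)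
        = (fun q : ℝ × ℝ => -(6 * q.1 * q.2) + 2 * t * q.2) := by funext q; ring
    replace key : HasFDerivAt (fun q : ℝ × ℝ => (-1 : ℝ) * (6 * q.1 * q.2) + 2 * t * q.2) _ p := key
    rw [this] at key
    refine key.congr_fderiv ?_
    ext v <;> simp <;> ring
  have hD : HasFDerivAt (fun q => Dh t q)
      ((((6 * p.1 + 2 * t) • E1 + (-(6 * p.2)) • E2).smulRight E1)
        + (((-(6 * p.2)) • E1 + (2 * t - 6 * p.1) • E2).smulRight E2)) p :=
    (ha.smul_const E1).add (hb.smul_const E2)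
  have hD2 : fderiv ℝ (fderiv ℝ (hmonkey t)) p
      = (((6 * p.1 + 2 * t) • E1 + (-(6 * p.2)) • E2).smulRight E1)
        + (((-(6 * p.2)) • E1 + (2 * t - 6 * p.1) • E2).smulRight E2) := by
    rw [fderiv_hmonkey]; exact hD.fderiv
  rw [hess2, iteratedFDeriv_two_apply, hD2]
  simp
  ring

lemma Dh_eq_zero_iff (t : ℝ) (p : ℝ × ℝ) :
    Dh t p = 0 ↔ 3 * p.1 ^ 2 - 3 * p.2 ^ 2 + 2 * t * p.1 = 0 ∧ -(6 * p.1 * p.2) + 2 * t * p.2 = 0 := by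
  constructor
  · intro h
    constructor
    · have := ContinuousLinearMap.ext_iff.mp h (1, 0); simpa [Dh] using this
    · have := ContinuousLinearMap.ext_iff.mp h (0, 1); simpa [Dh] using this
  · rintro ⟨h1, h2⟩
    ext v <;> simp [Dh, h1, h2]

lemma indexOne_saddle (t y : ℝ) (ht : 0 < t) (hy : y ^ 2 = t ^ 2 / 3) :
    IndexOneAt (hmonkey t) (t / 3, y) := by
  refine ⟨(-6 * y, -4 * t), (1, 0), ?_, ?_, ?_, ?_, ?_⟩
  · rw [linearIndependent_fin2]
    refine ⟨by simp, fun a h => ?_⟩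
    simp only [Matrix.cons_val_one, Matrix.head_cons, Matrix.cons_val_zero, Prod.smul_mk,
      smul_eq_mul, Prod.mk.injEq] at h
    have := h.2; simp at this; linarith
  · rw [hess2_hmonkey]; simp; ring
  · rw [hess2_hmonkey]; simp; ring
  · rw [hess2_hmonkey]
    have hyt : 0 < t * y ^ 2 := by rw [hy]; positivity
    simp only []
    nlinarith [hyt, hy, ht]
  · rw [hess2_hmonkey]; simp only []; nlinarith [ht]

/-- For `t > 0`, `h_t` has exactly the four critical points `(0,0)`, `(-2t/3, 0)`,
`(t/3, ±t/√3)`; all are nondegenerate, `(0,0)` is a local minimum of Morse index 0 and the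
other three are saddles of Morse index 1. -/
theorem stmt14 (t : ℝ) (ht : 0 < t) :
    {p : ℝ × ℝ | fderiv ℝ (hmonkey t) p = 0} =
      {((0 : ℝ), (0 : ℝ)), (-2 * t / 3, 0), (t / 3, t / Real.sqrt 3),
        (t / 3, -t / Real.sqrt 3)} ∧
    IsLocalMin (hmonkey t) (0, 0) ∧ IndexZeroAt (hmonkey t) (0, 0) ∧
    IndexOneAt (hmonkey t) (-2 * t / 3, 0) ∧
    IndexOneAt (hmonkey t) (t / 3, t / Real.sqrt 3) ∧
    IndexOneAt (hmonkey t) (t / 3, -t / Real.sqrt 3) := by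
  have hs0 : (0 : ℝ) < Real.sqrt 3 := Real.sqrt_pos.mpr (by norm_num)
  have hs2 : Real.sqrt 3 ^ 2 = 3 := Real.sq_sqrt (by norm_num)
  have hy2 : (t / Real.sqrt 3) ^ 2 = t ^ 2 / 3 := by
    rw [div_pow, hs2]
  refine ⟨?_, ?_, ?_, ?_, ?_, ?_⟩
  · ext p
    simp only [Set.mem_setOf_eq, fderiv_hmonkey, Dh_eq_zero_iff, Set.mem_insert_iff,
      Set.mem_singleton_iff, Prod.ext_iff]
    constructor
    · rintro ⟨h1, h2⟩
      have h2' : 2 * p.2 * (t - 3 * p.1) = 0 := by linarith [h2]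
      rcases mul_eq_zero.mp h2' with h | h
      · have hy : p.2 = 0 := by linarith
        have h1' : p.1 * (3 * p.1 + 2 * t) = 0 := by nlinarith [h1, hy]
        rcases mul_eq_zero.mp h1' with h | h
        · exact Or.inl ⟨h, hy⟩
        · exact Or.inr (Or.inl ⟨by linarith, hy⟩)
      · have hx : p.1 = t / 3 := by linarith
        have hyy : p.2 ^ 2 = t ^ 2 / 3 := by nlinarith [h1, hx]
        have : (p.2 - t / Real.sqrt 3) * (p.2 + t / Real.sqrt 3) = 0 := by
          have : p.2 ^ 2 - (t / Real.sqrt 3) ^ 2 = 0 := by rw [hy2]; linarith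
          nlinarith [this]
        rcases mul_eq_zero.mp this with h' | h'
        · exact Or.inr (Or.inr (Or.inl ⟨hx, by linarith⟩))
        · refine Or.inr (Or.inr (Or.inr ⟨hx, by rw [neg_div] at *; linarith⟩))
    · have hy2' : (-t / Real.sqrt 3) ^ 2 = t ^ 2 / 3 := by
        rw [neg_div, neg_pow]; simpa using hy2
      rintro (⟨h1, h2⟩ | ⟨h1, h2⟩ | ⟨h1, h2⟩ | ⟨h1, h2⟩) <;> rw [h1, h2] <;> constructor
      · ring
      · ring
      · ring
      · ring
      · rw [hy2]; ring
      · ring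
      · rw [hy2']; ring
      · ring
  · have hev : ∀ᶠ p : ℝ × ℝ in nhds ((0 : ℝ), (0 : ℝ)), |p.1| < t / 3 := by
      have hc : Continuous fun p : ℝ × ℝ => |p.1| := continuous_fst.abs
      have := hc.tendsto ((0 : ℝ), (0 : ℝ))
      simp only [abs_zero] at this
      exact this.eventually_lt_const (by positivity)
    rw [IsLocalMin, IsMinFilter]
    filter_upwards [hev] with p hp
    have habs := abs_lt.mp hp
    have e1 : 0 ≤ p.1 ^ 2 * (p.1 + t) := mul_nonneg (sq_nonneg _) (by linarith)
    have e2 : 0 ≤ p.2 ^ 2 * (t - 3 * p.1) := mul_nonneg (sq_nonneg _) (by linarith)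
    simp only [hmonkey]
    nlinarith [e1, e2]
  · refine ⟨(1, 0), (0, 1), ?_, ?_, ?_, ?_, ?_⟩
    · rw [linearIndependent_fin2]
      refine ⟨by simp, fun a h => ?_⟩
      simp [Prod.ext_iff] at h
    · rw [hess2_hmonkey]; simp
    · rw [hess2_hmonkey]; simp
    · rw [hess2_hmonkey]; simp; linarith
    · rw [hess2_hmonkey]; simp; linarith
  · refine ⟨(1, 0), (0, 1), ?_, ?_, ?_, ?_, ?_⟩
    · rw [linearIndependent_fin2]
      refine ⟨by simp, fun a h => ?_⟩
      simp [Prod.ext_iff] at h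
    · rw [hess2_hmonkey]; simp
    · rw [hess2_hmonkey]; simp
    · rw [hess2_hmonkey]; simp; linarith
    · rw [hess2_hmonkey]; simp; linarith
  · exact indexOne_saddle t _ ht hy2
  · exact indexOne_saddle t _ ht (by rw [neg_div, neg_pow]; simpa using hy2)
end
end
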